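/- In ℤ² with the lexicographic order, with A := {(x,y) : (x,y) > (0,0)} and nA the n-fold sumset, the element (1,0) belongs to ⋂_{n≥1} nA; in particular ⋂_{n≥1} nA ≠ ∅. -/
import Mathlib

open Pointwise

/-- The set of lexicographically positive elements of ℤ². -/
def Apos : Set (ℤ × ℤ) := {p : ℤ × ℤ | 0 < p.1 ∨ (p.1 = 0 ∧ 0 < p.2)}

/-- `nFoldSum n` is the (n+1)-fold sumset A + A + ⋯ + A. -/
def nFoldSum : ℕ → Set (ℤ × ℤ)
  | 0 => Apos
  | n + 1 => nFoldSum n + Apos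

lemma one_k_mem : ∀ n : ℕ, ∀ k : ℤ, ((1 : ℤ), k) ∈ nFoldSum n := by
  intro n
  induction n with
  | zero => intro k; exact Or.inl one_pos
  | succ n ih =>
    intro k
    refine ⟨(1, k - 1), ih (k - 1), (0, 1), Or.inr ⟨rfl, one_pos⟩, ?_⟩
    simp [Prod.ext_iff]

/-- In ℤ² with the lexicographic order, (1, 0) belongs to ⋂_{n ≥ 1} nA; in
particular this intersection is nonempty. -/
theorem stmt_14 :
    (((1 : ℤ), (0 : ℤ)) ∈ ⋂ n : ℕ, nFoldSum n) ∧
      (⋂ n : ℕ, nFoldSum n).Nonempty := by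
  have h : ((1 : ℤ), (0 : ℤ)) ∈ ⋂ n : ℕ, nFoldSum n :=
    Set.mem_iInter.2 fun n => one_k_mem n 0
  exact ⟨h, ⟨_, h⟩⟩
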